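/- arXiv:1607.05451 — 3 statements merged into one kernel-verified Lean document; each statement's English description precedes it below -/
import Mathlib

section
/- Let d, n, r, t be natural numbers with d ≥ 1, 1 ≤ n ≤ 2^d and r ≤ t. Suppose there is a deterministic membership filter with M memory states for n-point sets in {0,1}^d that has no false negatives at radius r and has no false positives at distance t, i.e., for every S ⊆ {0,1}^d with |S| = n and every q ∈ {0,1}^d with D(q,S) > t, the query q is answered negatively. Then (M : ℝ) ≥ (2^d / (e · n · b(t,d)))^n, where e is Euler's number. -/
/-- `ballSize t d` is the cardinality of a Hamming ball of radius `t` in `{0,1}^d`,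
i.e. `∑_{i=0}^{min(t,d)} C(d,i)` (terms with `i > d` vanish). -/
def ballSize (t d : ℕ) : ℕ := ∑ i ∈ Finset.range (t + 1), d.choose i

open Finset in
lemma hammingBall_card_le (d t : ℕ) (p : Fin d → Bool) :
    (Finset.univ.filter fun q : Fin d → Bool => hammingDist q p ≤ t).card ≤ ballSize t d := by
  classical
  have hinj : Set.InjOn (fun q : Fin d → Bool => (Finset.univ.filter fun i => q i ≠ p i))
      ↑(Finset.univ.filter fun q : Fin d → Bool => hammingDist q p ≤ t) := by
    intro q hq q' hq' h
    funext i
    have hmem : i ∈ (Finset.univ.filter fun i => q i ≠ p i) ↔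
        i ∈ (Finset.univ.filter fun i => q' i ≠ p i) := by
      simp only at h; rw [h]
    simp only [mem_filter, mem_univ, true_and] at hmem
    by_cases hqi : q i = p i
    · by_cases hqi' : q' i = p i
      · rw [hqi, hqi']
      · exact absurd (hmem.mpr hqi') (by simp [hqi])
    · have hqi' : q' i ≠ p i := hmem.mp hqi
      cases hb : p i <;> revert hqi hqi' <;> cases hq1 : q i <;> cases hq2 : q' i <;> simp [hb]
  have hmap : ∀ q ∈ (Finset.univ.filter fun q : Fin d → Bool => hammingDist q p ≤ t),
      (Finset.univ.filter fun i => q i ≠ p i) ∈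
        (Finset.range (t + 1)).biUnion (fun i => Finset.univ.powersetCard i) := by
    intro q hq
    simp only [mem_filter, mem_univ, true_and] at hq
    simp only [mem_biUnion, mem_range, Finset.mem_powersetCard]
    exact ⟨(Finset.univ.filter fun i => q i ≠ p i).card,
      by simpa [hammingDist] using Nat.lt_succ_of_le hq, subset_univ _, rfl⟩
  calc (Finset.univ.filter fun q : Fin d → Bool => hammingDist q p ≤ t).card
      ≤ ((Finset.range (t + 1)).biUnion (fun i => (Finset.univ : Finset (Fin d)).powersetCard i)).card :=
        Finset.card_le_card_of_injOn _ hmap hinj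
    _ ≤ ∑ i ∈ Finset.range (t + 1), ((Finset.univ : Finset (Fin d)).powersetCard i).card :=
        Finset.card_biUnion_le
    _ = ballSize t d := by
        simp [Finset.card_powersetCard, ballSize]

/-- `(N/n)^n ≤ C(N,n)` for `n ≤ N`. -/
lemma pow_div_le_choose {n N : ℕ} (hn : 1 ≤ n) (h : n ≤ N) :
    ((N : ℝ) / n) ^ n ≤ (N.choose n : ℝ) := by
  have hfac : (0 : ℝ) < (n.factorial : ℝ) := by exact_mod_cast n.factorial_pos
  have hchoose : (N.choose n : ℝ) = (N.descFactorial n : ℝ) / (n.factorial : ℝ) := by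
    rw [eq_div_iff (ne_of_gt hfac)]
    rw [mul_comm]
    exact_mod_cast (N.descFactorial_eq_factorial_mul_choose n).symm
  have hdesc : (N.descFactorial n : ℝ) = ∏ i ∈ Finset.range n, ((N - i : ℕ) : ℝ) := by
    rw [N.descFactorial_eq_prod_range n]; push_cast; rfl
  have hfacp : (n.factorial : ℝ) = ∏ i ∈ Finset.range n, ((n - i : ℕ) : ℝ) := by
    rw [← n.descFactorial_self, n.descFactorial_eq_prod_range n]; push_cast; rfl
  rw [hchoose, hdesc, hfacp, ← Finset.prod_div_distrib]
  have hconst : ((N : ℝ) / n) ^ n = ∏ _i ∈ Finset.range n, ((N : ℝ) / n) := by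
    rw [Finset.prod_const, Finset.card_range]
  rw [hconst]
  apply Finset.prod_le_prod
  · intro i _
    positivity
  · intro i hi
    rw [Finset.mem_range] at hi
    have hiN : i < N := lt_of_lt_of_le hi h
    have h1 : (0 : ℝ) < ((n - i : ℕ) : ℝ) := by
      have : 0 < n - i := Nat.sub_pos_of_lt hi
      exact_mod_cast this
    have h2 : (0 : ℝ) < (n : ℝ) := by exact_mod_cast hn
    rw [div_le_div_iff₀ h2 h1]
    have hnat : N * (n - i) ≤ (N - i) * n := by
      zify [Nat.le_of_lt hi, Nat.le_of_lt hiN]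
      nlinarith
    exact_mod_cast hnat

/-- Any deterministic membership filter with `M` memory states for
`n`-point sets in `{0,1}^d` having no false negatives at radius `r` and no false
positives at distance `t` satisfies `M ≥ (2^d / (e·n·b(t,d)))^n`. -/
theorem stmt0 (d n r t M : ℕ) (hd : 1 ≤ d) (hn1 : 1 ≤ n) (hn2 : n ≤ 2 ^ d)
    (hrt : r ≤ t)
    (enc : {S : Finset (Fin d → Bool) // S.card = n} → Fin M)
    (qry : Fin M → (Fin d → Bool) → Bool)
    (hFN : ∀ (S : {S : Finset (Fin d → Bool) // S.card = n}) (q : Fin d → Bool),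
      (∃ p ∈ S.1, hammingDist q p ≤ r) → qry (enc S) q = true)
    (hFP : ∀ (S : {S : Finset (Fin d → Bool) // S.card = n}) (q : Fin d → Bool),
      (∀ p ∈ S.1, t < hammingDist q p) → qry (enc S) q = false) :
    ((2 : ℝ) ^ d / (Real.exp 1 * n * ballSize t d)) ^ n ≤ (M : ℝ) := by
  classical
  set b := ballSize t d with hb
  set K := n * b with hK
  set N := 2 ^ d with hN
  have hb1 : 1 ≤ b := by
    rw [hb]
    unfold ballSize
    calc 1 = d.choose 0 := by simp
    _ ≤ _ := Finset.single_le_sum (f := fun i => d.choose i) (fun i _ => Nat.zero_le _)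
        (by simp)
  have hnK : n ≤ K := by
    rw [hK]; nlinarith
  -- Step 1: counting
  have key : N.choose n ≤ M * K.choose n := by
    have hcard : Fintype.card {S : Finset (Fin d → Bool) // S.card = n} = N.choose n := by
      rw [Fintype.card_finset_len]
      congr 1
      simp [hN]
    rw [← hcard]
    rw [Fintype.card, Finset.card_eq_sum_card_fiberwise
      (f := fun S : {S : Finset (Fin d → Bool) // S.card = n} => enc S)
      (t := Finset.univ) (fun x _ => Finset.mem_univ _)]
    have hfiber : ∀ m : Fin M,
        (Finset.univ.filter fun S : {S : Finset (Fin d → Bool) // S.card = n} =>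
          enc S = m).card ≤ K.choose n := by
      intro m
      by_cases hne : (Finset.univ.filter fun S : {S : Finset (Fin d → Bool) // S.card = n} =>
          enc S = m).Nonempty
      · obtain ⟨S₀, hS₀⟩ := hne
        rw [Finset.mem_filter] at hS₀
        set A : Finset (Fin d → Bool) := Finset.univ.filter fun q => qry m q = true with hA
        have hAcard : A.card ≤ K := by
          have hsub : A ⊆ S₀.1.biUnion
              (fun p => Finset.univ.filter fun q => hammingDist q p ≤ t) := by
            intro q hq
            rw [hA, Finset.mem_filter] at hq
            by_contra hc
            simp only [Finset.mem_biUnion, Finset.mem_filter, Finset.mem_univ, true_and,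
              not_exists, not_and, not_le] at hc
            have := hFP S₀ q (fun p hp => hc p hp)
            rw [hS₀.2] at this
            rw [this] at hq
            exact absurd hq.2 (by simp)
          calc A.card ≤ _ := Finset.card_le_card hsub
            _ ≤ ∑ p ∈ S₀.1, (Finset.univ.filter fun q => hammingDist q p ≤ t).card :=
              Finset.card_biUnion_le
            _ ≤ ∑ _p ∈ S₀.1, b := Finset.sum_le_sum (fun p _ => hammingBall_card_le d t p)
            _ = n * b := by rw [Finset.sum_const, S₀.2, smul_eq_mul]
        have hinj : (Finset.univ.filter fun S : {S : Finset (Fin d → Bool) // S.card = n} =>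
            enc S = m).card ≤ (A.powersetCard n).card := by
          apply Finset.card_le_card_of_injOn (fun S => S.1)
          · intro S hS
            rw [Finset.mem_coe, Finset.mem_filter] at hS
            rw [Finset.mem_coe, Finset.mem_powersetCard]
            refine ⟨?_, S.2⟩
            intro p hp
            rw [hA, Finset.mem_filter]
            refine ⟨Finset.mem_univ _, ?_⟩
            have := hFN S p ⟨p, hp, by simp [hammingDist_self]⟩
            rwa [hS.2] at this
          · intro S _ S' _ h
            exact Subtype.ext h
        calc _ ≤ (A.powersetCard n).card := hinj
          _ = A.card.choose n := Finset.card_powersetCard n A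
          _ ≤ K.choose n := Nat.choose_le_choose n hAcard
      · rw [Finset.not_nonempty_iff_eq_empty] at hne
        rw [hne]
        simp
    calc _ ≤ ∑ _m : Fin M, K.choose n := Finset.sum_le_sum (fun m _ => hfiber m)
      _ = M * K.choose n := by simp [mul_comm]
  -- Step 2: real arithmetic
  have hE : (0 : ℝ) < Real.exp 1 := Real.exp_pos 1
  have hnR : (0 : ℝ) < n := by exact_mod_cast hn1
  have hbR : (0 : ℝ) < b := by exact_mod_cast hb1
  have hKR : (0 : ℝ) < K := by positivity
  have hNR : (0 : ℝ) < (N : ℝ) := by positivity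
  have hfacR : (0 : ℝ) < (n.factorial : ℝ) := by exact_mod_cast n.factorial_pos
  have h1 : ((N : ℝ) / n) ^ n ≤ (N.choose n : ℝ) := pow_div_le_choose hn1 hn2
  have h2 : (K.choose n : ℝ) ≤ (K : ℝ) ^ n / n.factorial := Nat.choose_le_pow_div n K
  have h3 : ((n : ℝ)) ^ n / n.factorial ≤ Real.exp 1 ^ n := by
    rw [← Real.exp_nat_mul]
    simpa using Real.pow_div_factorial_le_exp (x := (n : ℝ)) (by positivity) n
  -- main chain: N^n ≤ M * (E*K)^n
  have main : (N : ℝ) ^ n ≤ (M : ℝ) * (Real.exp 1 * K) ^ n := by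
    have e1 : (N : ℝ) ^ n = ((N : ℝ) / n) ^ n * (n : ℝ) ^ n := by
      rw [← mul_pow, div_mul_cancel₀ _ (ne_of_gt hnR)]
    have e2 : ((N : ℝ) / n) ^ n * (n : ℝ) ^ n ≤ (N.choose n : ℝ) * (n : ℝ) ^ n := by
      apply mul_le_mul_of_nonneg_right h1 (by positivity)
    have e3 : (N.choose n : ℝ) ≤ (M : ℝ) * (K.choose n : ℝ) := by exact_mod_cast key
    have e4 : (N.choose n : ℝ) * (n : ℝ) ^ n ≤ (M : ℝ) * (K.choose n : ℝ) * (n : ℝ) ^ n :=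
      mul_le_mul_of_nonneg_right e3 (by positivity)
    have e5 : (M : ℝ) * (K.choose n : ℝ) * (n : ℝ) ^ n ≤
        (M : ℝ) * ((K : ℝ) ^ n / n.factorial) * (n : ℝ) ^ n := by
      apply mul_le_mul_of_nonneg_right _ (by positivity)
      exact mul_le_mul_of_nonneg_left h2 (by positivity)
    have e6 : (M : ℝ) * ((K : ℝ) ^ n / n.factorial) * (n : ℝ) ^ n =
        (M : ℝ) * (K : ℝ) ^ n * ((n : ℝ) ^ n / n.factorial) := by ring
    have e7 : (M : ℝ) * (K : ℝ) ^ n * ((n : ℝ) ^ n / n.factorial) ≤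
        (M : ℝ) * (K : ℝ) ^ n * Real.exp 1 ^ n :=
      mul_le_mul_of_nonneg_left h3 (by positivity)
    calc (N : ℝ) ^ n = ((N : ℝ) / n) ^ n * (n : ℝ) ^ n := e1
      _ ≤ (N.choose n : ℝ) * (n : ℝ) ^ n := e2
      _ ≤ (M : ℝ) * (K.choose n : ℝ) * (n : ℝ) ^ n := e4
      _ ≤ (M : ℝ) * ((K : ℝ) ^ n / n.factorial) * (n : ℝ) ^ n := e5
      _ = (M : ℝ) * (K : ℝ) ^ n * ((n : ℝ) ^ n / n.factorial) := e6
      _ ≤ (M : ℝ) * (K : ℝ) ^ n * Real.exp 1 ^ n := e7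
      _ = (M : ℝ) * (Real.exp 1 * K) ^ n := by rw [mul_pow]; ring
  have hEK : (0 : ℝ) < Real.exp 1 * K := by positivity
  have hgoal : ((N : ℝ) / (Real.exp 1 * K)) ^ n ≤ (M : ℝ) := by
    rw [div_pow, div_le_iff₀ (by positivity)]
    exact main
  have hcast : ((2 : ℝ) ^ d / (Real.exp 1 * n * ballSize t d)) ^ n =
      ((N : ℝ) / (Real.exp 1 * K)) ^ n := by
    congr 1
    rw [hN, hK]
    push_cast
    ring_nf
    rw [hb]
  rw [hcast]
  exact hgoal
end

section
/- Let d, n, r, t be natural numbers with d ≥ 1, n ≥ 1 and r ≤ t, and let ε be a real number with 0 < ε ≤ 1/2 and n · b(t,d) ≤ ε · 2^d. Suppose there is a randomized membership filter with M memory states for n-point sets in {0,1}^d that has no false negatives at radius r and has average error ε at distance t, meaning: for every S ⊆ {0,1}^d with |S| = n, the expectation over ω ∼ μ of the number of points q with D(q,S) > t that are answered positively is at most ε · |{q ∈ {0,1}^d : D(q,S) > t}|. Then (M : ℝ) ≥ (1/(2ε))^n. -/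
lemma ball_card (d t : ℕ) (p : Fin d → Bool) :
    (Finset.univ.filter fun q : Fin d → Bool => hammingDist q p ≤ t).card = ballSize t d := by
  classical
  have hdist : ∀ q : Fin d → Bool,
      hammingDist q p = (Finset.univ.filter fun j => q j ≠ p j).card := fun q => rfl
  have hcard : (Finset.univ.filter fun q : Fin d → Bool => hammingDist q p ≤ t).card
      = (Finset.univ.filter fun A : Finset (Fin d) => A.card ≤ t).card := by
    apply Finset.card_bij' (fun q _ => Finset.univ.filter fun j => q j ≠ p j)
      (fun A _ => fun k => if k ∈ A then !(p k) else p k)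
    · intro q hq
      simp only [Finset.mem_filter, Finset.mem_univ, true_and] at hq ⊢
      rwa [hdist] at hq
    · intro A hA
      simp only [Finset.mem_filter, Finset.mem_univ, true_and] at hA ⊢
      rw [hdist]
      have : (Finset.univ.filter fun j =>
          (if j ∈ A then !(p j) else p j) ≠ p j) = A := by
        ext j
        by_cases h : j ∈ A <;> simp [h]
      rwa [this]
    · intro q hq
      funext k
      by_cases h : q k = p k
      · simp [h]
      · simp [h]
        revert h
        cases q k <;> cases p k <;> simp
    · intro A hA
      ext j
      by_cases h : j ∈ A <;> simp [h]
  rw [hcard]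
  have : (Finset.univ.filter fun A : Finset (Fin d) => A.card ≤ t)
      = (Finset.range (t + 1)).biUnion fun i => Finset.powersetCard i Finset.univ := by
    ext A
    simp [Finset.mem_powersetCard, Nat.lt_succ_iff, eq_comm]
  rw [this, Finset.card_biUnion]
  · simp [ballSize, Finset.card_powersetCard]
  · intro i _ j _ hij
    rw [Function.onFun, Finset.disjoint_left]
    intro A hA hA'
    simp only [Finset.mem_powersetCard] at hA hA'
    exact hij (hA.2 ▸ hA'.2 ▸ rfl)

lemma choose_ratio {K N : ℕ} (n : ℕ) (h : K ≤ N) :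
    K.choose n * N ^ n ≤ N.choose n * K ^ n := by
  have hdesc : K.descFactorial n * N ^ n ≤ N.descFactorial n * K ^ n := by
    have hN : N ^ n = ∏ _i ∈ Finset.range n, N := by simp
    have hK : K ^ n = ∏ _i ∈ Finset.range n, K := by simp
    rw [Nat.descFactorial_eq_prod_range, Nat.descFactorial_eq_prod_range, hN, hK,
      ← Finset.prod_mul_distrib, ← Finset.prod_mul_distrib]
    apply Finset.prod_le_prod'
    intro i _
    rcases le_or_gt i K with hi | hi
    · rw [Nat.sub_mul, Nat.sub_mul, mul_comm N K]
      exact Nat.sub_le_sub_left (Nat.mul_le_mul_left i h) _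
    · simp [Nat.sub_eq_zero_of_le hi.le]
  rw [Nat.descFactorial_eq_factorial_mul_choose, Nat.descFactorial_eq_factorial_mul_choose,
    mul_assoc, mul_assoc] at hdesc
  exact Nat.le_of_mul_le_mul_left hdesc (Nat.factorial_pos n)
/-- Any randomized membership filter with `M` memory states for
`n`-point sets in `{0,1}^d` having no false negatives at radius `r` and average
error `ε` at distance `t`, with `n·b(t,d) ≤ ε·2^d` and `0 < ε ≤ 1/2`,
satisfies `M ≥ (1/(2ε))^n`. -/
theorem stmt1 (d n r t M : ℕ) (ε : ℝ) (hd : 1 ≤ d) (hn : 1 ≤ n) (hrt : r ≤ t)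
    (hε0 : 0 < ε) (hε1 : ε ≤ 1 / 2)
    (hball : (n : ℝ) * (ballSize t d : ℝ) ≤ ε * 2 ^ d)
    (Ω : Type) [Fintype Ω] (μ : Ω → ℝ)
    (hμ0 : ∀ ω, 0 ≤ μ ω) (hμ1 : ∑ ω : Ω, μ ω = 1)
    (enc : Ω → {S : Finset (Fin d → Bool) // S.card = n} → Fin M)
    (qry : Fin M → (Fin d → Bool) → Bool)
    (hFN : ∀ (ω : Ω) (S : {S : Finset (Fin d → Bool) // S.card = n})
      (q : Fin d → Bool),
      (∃ p ∈ S.1, hammingDist q p ≤ r) → qry (enc ω S) q = true)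
    (hAvg : ∀ S : {S : Finset (Fin d → Bool) // S.card = n},
      ∑ ω : Ω, μ ω *
        ((Finset.univ.filter (fun q : Fin d → Bool =>
          (∀ p ∈ S.1, t < hammingDist q p) ∧ qry (enc ω S) q = true)).card : ℝ)
      ≤ ε * ((Finset.univ.filter (fun q : Fin d → Bool =>
          ∀ p ∈ S.1, t < hammingDist q p)).card : ℝ)) :
    (1 / (2 * ε)) ^ n ≤ (M : ℝ) := by
  have hcardPt : Fintype.card (Fin d → Bool) = 2 ^ d := by simp
  haveI : Nonempty Ω := by
    rcases isEmpty_or_nonempty Ω with h | h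
    · simp at hμ1
    · exact h
  -- far set is at most the whole cube
  have hfarN : ∀ S : {S : Finset (Fin d → Bool) // S.card = n},
      ((Finset.univ.filter (fun q : Fin d → Bool =>
        ∀ p ∈ S.1, t < hammingDist q p)).card : ℝ) ≤ 2 ^ d := by
    intro S
    have h1 : (Finset.univ.filter (fun q : Fin d → Bool =>
        ∀ p ∈ S.1, t < hammingDist q p)).card ≤ 2 ^ d := by
      calc (Finset.univ.filter (fun q : Fin d → Bool =>
            ∀ p ∈ S.1, t < hammingDist q p)).card
          ≤ (Finset.univ : Finset (Fin d → Bool)).card := Finset.card_filter_le _ _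
        _ = 2 ^ d := by rw [Finset.card_univ, hcardPt]
    exact_mod_cast h1
  -- choose a low-error randomness for each S
  have hpick : ∀ S : {S : Finset (Fin d → Bool) // S.card = n}, ∃ ω : Ω,
      ((Finset.univ.filter (fun q : Fin d → Bool =>
        (∀ p ∈ S.1, t < hammingDist q p) ∧ qry (enc ω S) q = true)).card : ℝ)
      ≤ ε * ((Finset.univ.filter (fun q : Fin d → Bool =>
        ∀ p ∈ S.1, t < hammingDist q p)).card : ℝ) := by
    intro S
    obtain ⟨ω₀, -, hmin⟩ := Finset.exists_min_image Finset.univ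
      (fun ω : Ω => (Finset.univ.filter (fun q : Fin d → Bool =>
        (∀ p ∈ S.1, t < hammingDist q p) ∧ qry (enc ω S) q = true)).card)
      Finset.univ_nonempty
    refine ⟨ω₀, ?_⟩
    calc ((Finset.univ.filter (fun q : Fin d → Bool =>
          (∀ p ∈ S.1, t < hammingDist q p) ∧ qry (enc ω₀ S) q = true)).card : ℝ)
        = ∑ ω : Ω, μ ω * ((Finset.univ.filter (fun q : Fin d → Bool =>
          (∀ p ∈ S.1, t < hammingDist q p) ∧ qry (enc ω₀ S) q = true)).card : ℝ) := by
          rw [← Finset.sum_mul, hμ1, one_mul]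
      _ ≤ ∑ ω : Ω, μ ω * ((Finset.univ.filter (fun q : Fin d → Bool =>
          (∀ p ∈ S.1, t < hammingDist q p) ∧ qry (enc ω S) q = true)).card : ℝ) := by
          apply Finset.sum_le_sum
          intro ω _
          exact mul_le_mul_of_nonneg_left
            (by exact_mod_cast hmin ω (Finset.mem_univ ω)) (hμ0 ω)
      _ ≤ ε * ((Finset.univ.filter (fun q : Fin d → Bool =>
          ∀ p ∈ S.1, t < hammingDist q p)).card : ℝ) := hAvg S
  choose pick hpickle using hpick
  set f : {S : Finset (Fin d → Bool) // S.card = n} → Fin M :=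
    fun S => enc (pick S) S with hf
  set A : Fin M → Finset (Fin d → Bool) :=
    fun m => Finset.univ.filter fun q => qry m q = true with hA
  -- S is contained in the accepting set of its state
  have hsub : ∀ (ω : Ω) (S : {S : Finset (Fin d → Bool) // S.card = n}),
      S.1 ⊆ A (enc ω S) := by
    intro ω S p hp
    simp only [hA, Finset.mem_filter, Finset.mem_univ, true_and]
    exact hFN ω S p ⟨p, hp, by simp⟩
  -- the accepting set of the chosen state is small
  have hAcard : ∀ S : {S : Finset (Fin d → Bool) // S.card = n},
      ((A (f S)).card : ℝ) ≤ 2 * ε * 2 ^ d := by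
    intro S
    have hsplit : A (f S) ⊆
        (S.1.biUnion fun p => Finset.univ.filter fun q => hammingDist q p ≤ t)
        ∪ (Finset.univ.filter (fun q : Fin d → Bool =>
          (∀ p ∈ S.1, t < hammingDist q p) ∧ qry (enc (pick S) S) q = true)) := by
      intro q hq
      simp only [hA, Finset.mem_filter, Finset.mem_univ, true_and] at hq
      by_cases hnear : ∃ p ∈ S.1, hammingDist q p ≤ t
      · obtain ⟨p, hp, hple⟩ := hnear
        exact Finset.mem_union_left _ (Finset.mem_biUnion.2 ⟨p, hp, by simp [hple]⟩)
      · push_neg at hnear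
        refine Finset.mem_union_right _ ?_
        simp only [Finset.mem_filter, Finset.mem_univ, true_and]
        exact ⟨hnear, hq⟩
    have h1 : (S.1.biUnion fun p =>
        Finset.univ.filter fun q => hammingDist q p ≤ t).card ≤ n * ballSize t d := by
      have h2 := Finset.card_biUnion_le_card_mul S.1
        (fun p => Finset.univ.filter fun q => hammingDist q p ≤ t) (ballSize t d)
        (fun p _ => le_of_eq (ball_card d t p))
      rwa [S.2] at h2
    calc ((A (f S)).card : ℝ)
        ≤ (((S.1.biUnion fun p => Finset.univ.filter fun q => hammingDist q p ≤ t)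
          ∪ (Finset.univ.filter (fun q : Fin d → Bool =>
            (∀ p ∈ S.1, t < hammingDist q p) ∧ qry (enc (pick S) S) q = true))).card : ℝ) := by
          exact_mod_cast Finset.card_le_card hsplit
      _ ≤ ((S.1.biUnion fun p => Finset.univ.filter fun q => hammingDist q p ≤ t).card : ℝ)
          + ((Finset.univ.filter (fun q : Fin d → Bool =>
            (∀ p ∈ S.1, t < hammingDist q p) ∧ qry (enc (pick S) S) q = true)).card : ℝ) := by
          exact_mod_cast Finset.card_union_le _ _
      _ ≤ (n : ℝ) * (ballSize t d : ℝ)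
          + ε * ((Finset.univ.filter (fun q : Fin d → Bool =>
            ∀ p ∈ S.1, t < hammingDist q p)).card : ℝ) := by
          refine add_le_add ?_ (hpickle S)
          exact_mod_cast h1
      _ ≤ ε * 2 ^ d + ε * 2 ^ d :=
          add_le_add hball (mul_le_mul_of_nonneg_left (hfarN S) hε0.le)
      _ = 2 * ε * 2 ^ d := by ring
  -- fiber counting
  have hfiber : ∀ m : Fin M,
      ((Finset.univ.filter fun S : {S : Finset (Fin d → Bool) // S.card = n} =>
        f S = m).card : ℝ) ≤ (2 * ε) ^ n * (((2 ^ d).choose n : ℕ) : ℝ) := by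
    intro m
    rcases (Finset.univ.filter fun S : {S : Finset (Fin d → Bool) // S.card = n} =>
        f S = m).eq_empty_or_nonempty with he | ⟨S₀, hS₀⟩
    · rw [he, Finset.card_empty]
      push_cast
      positivity
    · have hS₀m : f S₀ = m := (Finset.mem_filter.1 hS₀).2
      have hKN : (A m).card ≤ 2 ^ d := by
        calc (A m).card ≤ (Finset.univ : Finset (Fin d → Bool)).card :=
              Finset.card_le_card (Finset.subset_univ _)
          _ = 2 ^ d := by rw [Finset.card_univ, hcardPt]
      have hKreal : (((A m).card : ℕ) : ℝ) ≤ 2 * ε * 2 ^ d := hS₀m ▸ hAcard S₀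
      have hinj : (Finset.univ.filter fun S : {S : Finset (Fin d → Bool) // S.card = n} =>
          f S = m).card ≤ (A m).card.choose n := by
        rw [← Finset.card_powersetCard n (A m)]
        apply Finset.card_le_card_of_injOn (fun S => S.1)
        · intro S hS
          simp only [Finset.mem_coe, Finset.mem_filter] at hS ⊢
          rw [Finset.mem_powersetCard]
          exact ⟨hS.2 ▸ hsub (pick S) S, S.2⟩
        · intro S _ S' _ h
          exact Subtype.ext h
      have hNpos : (0 : ℝ) < ((2 : ℝ) ^ d) ^ n := by positivity
      have hratio : (((A m).card.choose n : ℕ) : ℝ)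
          ≤ (2 * ε) ^ n * (((2 ^ d).choose n : ℕ) : ℝ) := by
        have h1 : (((A m).card.choose n : ℕ) : ℝ) * ((2 : ℝ) ^ d) ^ n
            ≤ (((2 ^ d).choose n : ℕ) : ℝ) * (((A m).card : ℕ) : ℝ) ^ n := by
          have := choose_ratio (K := (A m).card) (N := 2 ^ d) n hKN
          exact_mod_cast this
        have h2 : ((((A m).card : ℕ) : ℝ)) ^ n ≤ (2 * ε * 2 ^ d) ^ n :=
          pow_le_pow_left₀ (Nat.cast_nonneg _) hKreal n
        have h2' : (((2 ^ d).choose n : ℕ) : ℝ) * (((A m).card : ℕ) : ℝ) ^ n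
            ≤ (((2 ^ d).choose n : ℕ) : ℝ) * (2 * ε * 2 ^ d) ^ n :=
          mul_le_mul_of_nonneg_left h2 (Nat.cast_nonneg _)
        have heq : (((2 ^ d).choose n : ℕ) : ℝ) * (2 * ε * 2 ^ d) ^ n
            = ((2 * ε) ^ n * (((2 ^ d).choose n : ℕ) : ℝ)) * ((2 : ℝ) ^ d) ^ n := by
          rw [mul_pow, mul_pow]; ring
        have h3 : (((A m).card.choose n : ℕ) : ℝ) * ((2 : ℝ) ^ d) ^ n
            ≤ ((2 * ε) ^ n * (((2 ^ d).choose n : ℕ) : ℝ)) * ((2 : ℝ) ^ d) ^ n := by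
          rw [← heq]; exact le_trans h1 h2'
        exact le_of_mul_le_mul_right h3 hNpos
      have hinj' : ((Finset.univ.filter fun S : {S : Finset (Fin d → Bool) // S.card = n} =>
          f S = m).card : ℝ) ≤ (((A m).card.choose n : ℕ) : ℝ) := by exact_mod_cast hinj
      exact le_trans hinj' hratio
  -- total count
  have hcount : (((2 ^ d).choose n : ℕ) : ℝ)
      ≤ (M : ℝ) * ((2 * ε) ^ n * (((2 ^ d).choose n : ℕ) : ℝ)) := by
    have hsum : (Finset.univ : Finset {S : Finset (Fin d → Bool) // S.card = n}).card
        = ∑ m : Fin M, (Finset.univ.filter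
          fun S : {S : Finset (Fin d → Bool) // S.card = n} => f S = m).card :=
      Finset.card_eq_sum_card_fiberwise (fun S _ => Finset.mem_univ (f S))
    have hcardSub : (Finset.univ : Finset {S : Finset (Fin d → Bool) // S.card = n}).card
        = (2 ^ d).choose n := by
      rw [Finset.card_univ, Fintype.card_finset_len, hcardPt]
    calc (((2 ^ d).choose n : ℕ) : ℝ)
        = ∑ m : Fin M, ((Finset.univ.filter
            fun S : {S : Finset (Fin d → Bool) // S.card = n} => f S = m).card : ℝ) := by
          rw [← hcardSub, hsum]
          push_cast
          rfl
      _ ≤ ∑ _m : Fin M, (2 * ε) ^ n * (((2 ^ d).choose n : ℕ) : ℝ) :=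
          Finset.sum_le_sum fun m _ => hfiber m
      _ = (M : ℝ) * ((2 * ε) ^ n * (((2 ^ d).choose n : ℕ) : ℝ)) := by
          rw [Finset.sum_const, Finset.card_univ, Fintype.card_fin, nsmul_eq_mul]
  -- positivity of the binomial
  have hb1 : 1 ≤ ballSize t d := by
    have := Finset.single_le_sum (f := fun i => d.choose i)
      (fun i _ => Nat.zero_le _) (Finset.mem_range.2 (Nat.succ_pos t))
    simpa [ballSize] using this
  have hnN : n ≤ 2 ^ d := by
    have h1 : (n : ℝ) ≤ ε * 2 ^ d := by
      calc (n : ℝ) = (n : ℝ) * 1 := by ring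
        _ ≤ (n : ℝ) * (ballSize t d : ℝ) := by
            apply mul_le_mul_of_nonneg_left _ (Nat.cast_nonneg n)
            exact_mod_cast hb1
        _ ≤ ε * 2 ^ d := hball
    have h2 : (n : ℝ) ≤ (2 : ℝ) ^ d := by nlinarith [pow_pos (two_pos (α := ℝ)) d]
    exact_mod_cast h2
  have hchoosepos : (0 : ℝ) < (((2 ^ d).choose n : ℕ) : ℝ) := by
    exact_mod_cast Nat.choose_pos hnN
  have hfinal : 1 ≤ (M : ℝ) * (2 * ε) ^ n := by
    have h4 : 1 * (((2 ^ d).choose n : ℕ) : ℝ)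
        ≤ ((M : ℝ) * (2 * ε) ^ n) * (((2 ^ d).choose n : ℕ) : ℝ) := by
      rw [one_mul, mul_assoc]
      exact hcount
    exact le_of_mul_le_mul_right h4 hchoosepos
  have h2ε : (0 : ℝ) < 2 * ε := by linarith
  rw [div_pow, one_pow, div_le_iff₀ (pow_pos h2ε n)]
  linarith [hfinal]
end

section
/- Let d be an even natural number with d ≥ 2, let r be a natural number with 1 ≤ r ≤ d/2, and let A ⊆ {0,1}^d be a set with |A| ≤ 2^(d−1). Then the number of points x ∈ {0,1}^d such that the Hamming ball B(x,r) of radius r around x is contained in A is at most ∑_{i=0}^{d/2 − r} C(d,i), the cardinality of a Hamming ball of radius d/2 − r in {0,1}^d. -/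
open Finset

variable {d : ℕ}

/-- closed neighborhood in the Hamming cube -/
def Nb {d : ℕ} (A : Finset (Fin d → Bool)) : Finset (Fin d → Bool) :=
  univ.filter (fun x => ∃ a ∈ A, hammingDist x a ≤ 1)

/-- partial sum of binomial coefficients: `Ms d k = ∑_{i<k} C(d,i)` -/
def Ms (d k : ℕ) : ℕ := ∑ i ∈ Finset.range k, d.choose i

/-- non-dependent cons -/
def cns {n : ℕ} (b : Bool) (x : Fin n → Bool) : Fin (n+1) → Bool := Fin.cons b x

lemma cns_zero {n : ℕ} (b : Bool) (x : Fin n → Bool) : cns b x 0 = b := rfl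

lemma cns_succ {n : ℕ} (b : Bool) (x : Fin n → Bool) (i : Fin n) : cns b x i.succ = x i := by
  simp [cns]

lemma cns_inj {n : ℕ} (b : Bool) : Function.Injective (cns (n := n) b) := by
  intro x y h
  exact Fin.cons_right_injective b (by exact h)

lemma mem_Nb {A : Finset (Fin d → Bool)} {x : Fin d → Bool} :
    x ∈ Nb A ↔ ∃ a ∈ A, hammingDist x a ≤ 1 := by
  simp [Nb]

lemma subset_Nb (A : Finset (Fin d → Bool)) : A ⊆ Nb A := by
  intro a ha
  exact mem_Nb.2 ⟨a, ha, by simp [hammingDist_self]⟩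

lemma hd_cns {n : ℕ} (b c : Bool) (x y : Fin n → Bool) :
    hammingDist (cns b x) (cns c y) = (if b = c then 0 else 1) + hammingDist x y := by
  unfold hammingDist
  rw [Finset.card_filter, Finset.card_filter, Fin.sum_univ_succ]
  simp only [cns_zero, cns_succ]
  by_cases h : b = c <;> simp [h]

/-- section of a set along the first coordinate -/
def sect {n : ℕ} (A : Finset (Fin (n+1) → Bool)) (b : Bool) : Finset (Fin n → Bool) :=
  univ.filter (fun x => cns b x ∈ A)

lemma card_split {n : ℕ} (A : Finset (Fin (n+1) → Bool)) :
    A.card = (sect A false).card + (sect A true).card := by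
  have h1 : ∀ b : Bool, (sect A b).card = (A.filter (fun z => z 0 = b)).card := by
    intro b
    apply Finset.card_bij (fun x _ => cns b x)
    · intro x hx
      simp only [sect, mem_filter, mem_univ, true_and] at hx
      simp [mem_filter, hx, cns_zero]
    · intro x hx y hy h
      exact cns_inj b h
    · intro z hz
      simp only [mem_filter] at hz
      have hz2 : cns (z 0) (Fin.tail z) = z := Fin.cons_self_tail z
      refine ⟨Fin.tail z, ?_, ?_⟩
      · simp only [sect, mem_filter, mem_univ, true_and]
        rw [← hz.2, hz2]
        exact hz.1
      · rw [← hz.2, hz2]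
  rw [h1, h1]
  rw [← Finset.card_filter_add_card_filter_not (s := A) (p := fun z => z 0 = false)]
  congr 1
  apply congrArg
  apply Finset.filter_congr
  intro z _
  simp [Bool.not_eq_false]

lemma sect_Nb_sub {n : ℕ} (A : Finset (Fin (n+1) → Bool)) (b : Bool) :
    (Nb (sect A b)).image (cns b) ⊆ Nb A := by
  intro z hz
  simp only [mem_image] at hz
  obtain ⟨x, hx, rfl⟩ := hz
  obtain ⟨a, ha, hda⟩ := mem_Nb.1 hx
  refine mem_Nb.2 ⟨cns b a, ?_, ?_⟩
  · simpa [sect] using ha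
  · rw [hd_cns]; simpa using hda

lemma sect_flip_sub {n : ℕ} (A : Finset (Fin (n+1) → Bool)) (b : Bool) :
    (sect A b).image (cns (!b)) ⊆ Nb A := by
  intro z hz
  simp only [mem_image] at hz
  obtain ⟨x, hx, rfl⟩ := hz
  refine mem_Nb.2 ⟨cns b x, ?_, ?_⟩
  · simpa [sect] using hx
  · rw [hd_cns]
    simp [hammingDist_self]

lemma disj_cns {n : ℕ} (S T : Finset (Fin n → Bool)) (b c : Bool) (hbc : b ≠ c) :
    Disjoint (S.image (cns b)) (T.image (cns c)) := by
  rw [Finset.disjoint_left]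
  intro z hz hz'
  simp only [mem_image] at hz hz'
  obtain ⟨x, _, rfl⟩ := hz
  obtain ⟨y, _, hy⟩ := hz'
  apply hbc
  have := congrArg (fun f => f 0) hy
  simpa [cns_zero] using this.symm

/-- decomposition bound D1 -/
lemma D1 {n : ℕ} (A : Finset (Fin (n+1) → Bool)) (b : Bool) :
    (Nb (sect A b)).card + (sect A b).card ≤ (Nb A).card := by
  have h := Finset.card_union_of_disjoint (disj_cns (Nb (sect A b)) (sect A b) b (!b)
    (by cases b <;> simp))
  calc (Nb (sect A b)).card + (sect A b).card
      = ((Nb (sect A b)).image (cns b)).card + ((sect A b).image (cns (!b))).card := by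
        rw [Finset.card_image_of_injective _ (cns_inj b),
          Finset.card_image_of_injective _ (cns_inj (!b))]
    _ = (((Nb (sect A b)).image (cns b)) ∪ ((sect A b).image (cns (!b)))).card := h.symm
    _ ≤ (Nb A).card := by
        apply Finset.card_le_card
        exact Finset.union_subset (sect_Nb_sub A b) (sect_flip_sub A b)

/-- decomposition bound D2 -/
lemma D2 {n : ℕ} (A : Finset (Fin (n+1) → Bool)) :
    (Nb (sect A false)).card + (Nb (sect A true)).card ≤ (Nb A).card := by
  have h := Finset.card_union_of_disjoint (disj_cns (Nb (sect A false)) (Nb (sect A true))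
    false true (by simp))
  calc (Nb (sect A false)).card + (Nb (sect A true)).card
      = ((Nb (sect A false)).image (cns false)).card
          + ((Nb (sect A true)).image (cns true)).card := by
        rw [Finset.card_image_of_injective _ (cns_inj false),
          Finset.card_image_of_injective _ (cns_inj true)]
    _ = (((Nb (sect A false)).image (cns false)) ∪ ((Nb (sect A true)).image (cns true))).card :=
        h.symm
    _ ≤ (Nb A).card := by
        apply Finset.card_le_card
        exact Finset.union_subset (sect_Nb_sub A false) (sect_Nb_sub A true)

lemma Ms_succ (d k : ℕ) : Ms d (k+1) = Ms d k + d.choose k := Finset.sum_range_succ _ _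

lemma Ms_pascal (n j : ℕ) : Ms (n+1) (j+1) = Ms n (j+1) + Ms n j := by
  induction j with
  | zero => simp [Ms]
  | succ j ih =>
      rw [Ms_succ (n+1) (j+1), ih, Nat.choose_succ_succ' n j, Ms_succ n (j+1), Ms_succ n j]
      ring

lemma Ms_self (d : ℕ) : Ms d (d+1) = 2 ^ d := Nat.sum_range_choose d

lemma Ms_d (d : ℕ) : Ms d d = 2 ^ d - 1 := by
  have h := Ms_succ d d
  rw [Ms_self, Nat.choose_self] at h
  omega

/-- log-concavity of binomial coefficients -/
lemma choose_logconc (n k : ℕ) (hk : 1 ≤ k) :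
    n.choose (k-1) * n.choose (k+1) ≤ n.choose k * n.choose k := by
  obtain ⟨j, rfl⟩ := Nat.exists_eq_add_of_le hk
  simp only [Nat.add_sub_cancel_left] at *
  -- k = 1 + j ; show choose n j * choose n (j+2) ≤ choose n (j+1)^2
  rcases le_or_gt (j+1) n with hn | hn
  · -- identities: choose n (j+2) * (j+2) = choose n (j+1) * (n - (j+1))
    --             choose n (j+1) * (j+1) = choose n j * (n - j)
    have h1 := Nat.choose_succ_right_eq n (j+1)
    have h2 := Nat.choose_succ_right_eq n j
    -- multiply target by (j+2)*(n-j):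
    have key : (n.choose j * n.choose (1+j+1)) * ((j+2) * (n-j))
        ≤ (n.choose (1+j) * n.choose (1+j)) * ((j+2) * (n-j)) := by
      have e1 : (n.choose j * n.choose (1+j+1)) * ((j+2) * (n-j))
          = (n.choose (1+j+1) * (j+2)) * (n.choose j * (n-j)) := by ring_nf
      rw [e1]
      have e2 : 1 + j + 1 = (j+1) + 1 := by ring
      rw [e2, h1]
      have e3 : n.choose j * (n - j) = n.choose (j+1) * (j+1) := h2.symm
      rw [e3]
      have e4 : n.choose (j + 1) * (n - (j + 1)) * (n.choose (j + 1) * (j + 1))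
          = (n.choose (1+j) * n.choose (1+j)) * ((j+1) * (n - (j+1))) := by
        rw [show 1 + j = j + 1 from by ring]; ring
      rw [e4]
      apply Nat.mul_le_mul_left
      have : n - (j+1) ≤ n - j := by omega
      exact Nat.mul_le_mul (by omega) this
    have hpos : 0 < (j+2) * (n-j) := by
      apply Nat.mul_pos (by omega) (by omega)
    exact Nat.le_of_mul_le_mul_right key hpos
  · -- n < j+1 : choose n (1+j+1) = 0
    have : n.choose (1+j+1) = 0 := Nat.choose_eq_zero_of_lt (by omega)
    simp [this]
-- case (ii-a) arithmetic
lemma arith_a (Bk1 Bk Bk2 t tu tv Pk X Y : ℕ)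
    (hlog : Bk1 * Bk2 ≤ Bk * Bk) (ht : t ≤ Bk + Bk1) (hs : t ≤ Bk1 + tu + tv)
    (hx : Bk * (Pk + Bk) + tu * Bk2 ≤ Bk * X) (hy : Bk * (Pk + Bk) + tv * Bk2 ≤ Bk * Y)
    (hBk : 0 < Bk) :
    (Bk + Bk1) * ((Pk + Bk) + Pk) + t * (Bk + Bk2) ≤ (Bk + Bk1) * (X + Y) := by
  have key : Bk * ((Bk + Bk1) * ((Pk + Bk) + Pk) + t * (Bk + Bk2))
      ≤ Bk * ((Bk + Bk1) * (X + Y)) := by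
    zify at *
    have e1 : (0:ℤ) ≤ ((Bk + Bk1) - t) * (Bk * Bk - Bk1 * Bk2) :=
      mul_nonneg (by linarith) (by linarith)
    have e2 : (0:ℤ) ≤ ((Bk + Bk1) * Bk2) * ((tu + tv + Bk1) - t) :=
      mul_nonneg (by positivity) (by linarith)
    have Hx := mul_le_mul_of_nonneg_left hx (by positivity : (0:ℤ) ≤ (Bk:ℤ) + Bk1)
    have Hy := mul_le_mul_of_nonneg_left hy (by positivity : (0:ℤ) ≤ (Bk:ℤ) + Bk1)
    nlinarith [Hx, Hy, e1, e2]
  exact Nat.le_of_mul_le_mul_left key hBk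

-- case (ii-b) arithmetic
lemma arith_b (Bk1 Bk Bk2 t tu sv Pk X Y : ℕ)
    (hlog : Bk1 * Bk2 ≤ Bk * Bk) (htusv : t ≤ tu + sv) (hDtu : (Bk + Bk1) * tu ≤ t * Bk)
    (hx : Bk * (Pk + Bk) + tu * Bk2 ≤ Bk * X) (hy : Bk1 * Pk + sv * Bk ≤ Bk1 * Y)
    (hBk : 0 < Bk) (hBk1 : 0 < Bk1) :
    (Bk + Bk1) * ((Pk + Bk) + Pk) + t * (Bk + Bk2) ≤ (Bk + Bk1) * (X + Y) := by
  have key : (Bk * Bk1) * ((Bk + Bk1) * ((Pk + Bk) + Pk) + t * (Bk + Bk2))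
      ≤ (Bk * Bk1) * ((Bk + Bk1) * (X + Y)) := by
    zify at *
    have e1 : (0:ℤ) ≤ (t * Bk - (Bk + Bk1) * tu) * (Bk * Bk - Bk1 * Bk2) :=
      mul_nonneg (by linarith) (by linarith)
    have e2 : (0:ℤ) ≤ ((Bk + Bk1) * (Bk * Bk)) * ((tu + sv) - t) :=
      mul_nonneg (by positivity) (by linarith)
    have Hx := mul_le_mul_of_nonneg_left hx
      (by positivity : (0:ℤ) ≤ ((Bk:ℤ) + Bk1) * Bk1)
    have Hy := mul_le_mul_of_nonneg_left hy
      (by positivity : (0:ℤ) ≤ ((Bk:ℤ) + Bk1) * Bk)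
    nlinarith [Hx, Hy, e1, e2]
  exact Nat.le_of_mul_le_mul_left key (by positivity)

-- case (ii-c) arithmetic
lemma arith_c (Bk1 Bk Bk2 t su sv Pk X Y : ℕ)
    (hlog : Bk1 * Bk2 ≤ Bk * Bk) (hsum : Bk1 + t ≤ su + sv)
    (hx : Bk1 * Pk + su * Bk ≤ Bk1 * X) (hy : Bk1 * Pk + sv * Bk ≤ Bk1 * Y)
    (hBk1 : 0 < Bk1) :
    (Bk + Bk1) * ((Pk + Bk) + Pk) + t * (Bk + Bk2) ≤ (Bk + Bk1) * (X + Y) := by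
  have key : Bk1 * ((Bk + Bk1) * ((Pk + Bk) + Pk) + t * (Bk + Bk2))
      ≤ Bk1 * ((Bk + Bk1) * (X + Y)) := by
    zify at *
    have e1 : (0:ℤ) ≤ t * (Bk * Bk - Bk1 * Bk2) :=
      mul_nonneg (by positivity) (by linarith)
    have e2 : (0:ℤ) ≤ ((Bk + Bk1) * Bk) * ((su + sv) - (Bk1 + t)) :=
      mul_nonneg (by positivity) (by linarith)
    have Hx := mul_le_mul_of_nonneg_left hx (by positivity : (0:ℤ) ≤ (Bk:ℤ) + Bk1)
    have Hy := mul_le_mul_of_nonneg_left hy (by positivity : (0:ℤ) ≤ (Bk:ℤ) + Bk1)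
    nlinarith [Hx, Hy, e1, e2]
  exact Nat.le_of_mul_le_mul_left key hBk1

/-- shorthand for the inductive hypothesis -/
def IH (n : ℕ) : Prop := ∀ (A : Finset (Fin n → Bool)) (k t : ℕ), k ≤ n → 1 ≤ t →
    t ≤ n.choose k → Ms n k + t ≤ A.card →
    n.choose k * Ms n (k+1) + t * n.choose (k+1) ≤ n.choose k * (Nb A).card

/-- wrapper: allow `s = 0` when `1 ≤ k` -/
lemma wrap {n : ℕ} (ih : IH n) (A : Finset (Fin n → Bool)) (k s : ℕ)
    (hk1 : 1 ≤ k) (hk : k ≤ n) (hs : s ≤ n.choose k) (h : Ms n k + s ≤ A.card) :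
    n.choose k * Ms n (k+1) + s * n.choose (k+1) ≤ n.choose k * (Nb A).card := by
  rcases Nat.eq_zero_or_pos s with rfl | hs1
  · obtain ⟨j, rfl⟩ : ∃ j, k = j + 1 := ⟨k - 1, by omega⟩
    have hj : j ≤ n := by omega
    have hbj : 0 < n.choose j := Nat.choose_pos hj
    have hc := ih A j (n.choose j) hj hbj le_rfl
      (by rw [← Ms_succ]; omega)
    have h2 : Ms n (j+1) + n.choose (j+1) ≤ (Nb A).card := by
      have h3 : n.choose j * (Ms n (j+1) + n.choose (j+1)) ≤ n.choose j * (Nb A).card := by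
        calc n.choose j * (Ms n (j+1) + n.choose (j+1))
            = n.choose j * Ms n (j+1) + n.choose j * n.choose (j+1) := by ring
          _ ≤ n.choose j * (Nb A).card := hc
      exact Nat.le_of_mul_le_mul_left h3 hbj
    have h4 : Ms n (j+2) ≤ (Nb A).card := by rw [Ms_succ]; exact h2
    calc n.choose (j+1) * Ms n (j+1+1) + 0 * n.choose (j+1+1)
        = n.choose (j+1) * Ms n (j+2) := by ring
      _ ≤ n.choose (j+1) * (Nb A).card := Nat.mul_le_mul_left _ h4
  · exact ih A k s hk hs1 hs h

/-- the inductive step -/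
lemma step {n : ℕ} (ih : IH n)
    (B C : Finset (Fin n → Bool)) (k t R : ℕ)
    (hk : k ≤ n) (ht1 : 1 ≤ t) (ht2 : t ≤ (n+1).choose k)
    (hsum : Ms (n+1) k + t ≤ B.card + C.card)
    (hvu : C.card ≤ B.card)
    (h1 : (Nb B).card + B.card ≤ R)
    (h2 : (Nb B).card + (Nb C).card ≤ R) :
    (n+1).choose k * Ms (n+1) (k+1) + t * (n+1).choose (k+1) ≤ (n+1).choose k * R := by
  set u := B.card with hu0
  set v := C.card with hv0
  set X := (Nb B).card with hX0
  set Y := (Nb C).card with hY0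
  have posBk : 0 < n.choose k := Nat.choose_pos hk
  have posDk : 0 < (n+1).choose k := Nat.choose_pos (by omega)
  have idD2 : (n+1).choose (k+1) = n.choose k + n.choose (k+1) := Nat.choose_succ_succ' n k
  have idQ2 : Ms (n+1) (k+1) = Ms n (k+1) + Ms n k := Ms_pascal n k
  have idP2 : Ms n (k+1) = Ms n k + n.choose k := Ms_succ n k
  by_cases hcase : (n+1).choose k * Ms n k + t * n.choose k ≤ (n+1).choose k * u
  · -- case (i): the large side is big enough
    have hPku : Ms n k < u := by
      have h3 : (n+1).choose k * Ms n k < (n+1).choose k * u := by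
        have : 1 ≤ t * n.choose k := Nat.mul_le_mul ht1 posBk
        omega
      exact lt_of_mul_lt_mul_left h3 (Nat.zero_le _)
    obtain ⟨w, hw⟩ : ∃ w, u = Ms n k + w := ⟨u - Ms n k, by omega⟩
    have hwpos : 1 ≤ w := by omega
    have hDw : t * n.choose k ≤ (n+1).choose k * w := by
      have e : (n+1).choose k * u = (n+1).choose k * Ms n k + (n+1).choose k * w := by
        rw [hw]; ring
      omega
    set t1 := min w (n.choose k) with ht1def
    have ht1ge : 1 ≤ t1 := le_min hwpos posBk
    have ht1le : t1 ≤ n.choose k := min_le_right _ _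
    have hA1 : Ms n k + t1 ≤ u := by
      have := min_le_left w (n.choose k); omega
    have ihB := ih B k t1 hk ht1ge ht1le hA1
    have hDt1 : t * n.choose k ≤ (n+1).choose k * t1 := by
      rcases le_total w (n.choose k) with hmin | hmin
      · rwa [ht1def, min_eq_left hmin]
      · rw [ht1def, min_eq_right hmin]
        calc t * n.choose k ≤ (n+1).choose k * n.choose k :=
              Nat.mul_le_mul_right _ ht2
          _ = (n+1).choose k * n.choose k := rfl
    have key1 : (n+1).choose k * Ms n (k+1) + t * n.choose (k+1) ≤ (n+1).choose k * X := by
      have hh : n.choose k * ((n+1).choose k * Ms n (k+1) + t * n.choose (k+1))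
          ≤ n.choose k * ((n+1).choose k * X) := by
        have m1 : (n+1).choose k * (n.choose k * Ms n (k+1) + t1 * n.choose (k+1))
            ≤ (n+1).choose k * (n.choose k * X) := Nat.mul_le_mul_left _ ihB
        nlinarith [Nat.mul_le_mul_right (n.choose (k+1)) hDt1, m1]
      exact Nat.le_of_mul_le_mul_left hh posBk
    calc (n+1).choose k * Ms (n+1) (k+1) + t * (n+1).choose (k+1)
        = ((n+1).choose k * Ms n (k+1) + t * n.choose (k+1))
          + ((n+1).choose k * Ms n k + t * n.choose k) := by
          rw [idQ2, idD2]; ring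
      _ ≤ (n+1).choose k * X + (n+1).choose k * u := Nat.add_le_add key1 hcase
      _ = (n+1).choose k * (X + u) := by ring
      _ ≤ (n+1).choose k * R := Nat.mul_le_mul_left _ h1
  · -- case (ii)
    push_neg at hcase
    obtain ⟨j, rfl⟩ : ∃ j, k = j + 1 := by
      refine ⟨k - 1, ?_⟩
      rcases Nat.eq_zero_or_pos k with rfl | hp
      · exfalso
        simp only [Nat.choose_zero_right, one_mul, Ms, Finset.range_zero,
          Finset.sum_empty, Nat.zero_add] at hcase hsum ht2
        omega
      · omega
    have hj : j ≤ n := by omega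
    have posBk1 : 0 < n.choose j := Nat.choose_pos hj
    have idD : (n+1).choose (j+1) = n.choose (j+1) + n.choose j := by
      rw [Nat.choose_succ_succ' n j]; ring
    have idQ : Ms (n+1) (j+1) = Ms n (j+1) + Ms n j := Ms_pascal n j
    have idP : Ms n (j+1) = Ms n j + n.choose j := Ms_succ n j
    have hlog : n.choose j * n.choose (j+2) ≤ n.choose (j+1) * n.choose (j+1) := by
      have := choose_logconc n (j+1) (by omega)
      simpa using this
    -- lower bound for v
    have hvlow : (n+1).choose (j+1) * Ms n j + t * n.choose j + 1 ≤ (n+1).choose (j+1) * v := by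
      have hm : (n+1).choose (j+1) * (Ms (n+1) (j+1) + t) ≤ (n+1).choose (j+1) * (u + v) :=
        Nat.mul_le_mul_left _ hsum
      have e1 : (n+1).choose (j+1) * (Ms (n+1) (j+1) + t)
          = (n+1).choose (j+1) * Ms n (j+1) + (n+1).choose (j+1) * Ms n j
            + (n.choose (j+1)) * t + (n.choose j) * t := by
        rw [idQ, idD]; ring
      have e2 : (n+1).choose (j+1) * (u + v)
          = (n+1).choose (j+1) * u + (n+1).choose (j+1) * v := by ring
      have e3 : t * n.choose (j+1) = n.choose (j+1) * t := by ring
      have e4 : t * n.choose j = n.choose j * t := by ring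
      omega
    have hvP1 : Ms n j < v := by
      have h3 : (n+1).choose (j+1) * Ms n j < (n+1).choose (j+1) * v := by omega
      exact lt_of_mul_lt_mul_left h3 (Nat.zero_le _)
    -- common finishing move
    have finish : ∀ X' Y' : ℕ,
        (n.choose (j+1) + n.choose j) * ((Ms n (j+1) + n.choose (j+1)) + Ms n (j+1))
          + t * (n.choose (j+1) + n.choose (j+2)) ≤ (n.choose (j+1) + n.choose j) * (X' + Y') →
        X' + Y' ≤ R →
        (n+1).choose (j+1) * Ms (n+1) (j+1+1) + t * (n+1).choose (j+1+1)
          ≤ (n+1).choose (j+1) * R := by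
      intro X' Y' hmain hR
      have e : Ms (n+1) (j+1+1) = (Ms n (j+1) + n.choose (j+1)) + Ms n (j+1) := by
        rw [Ms_pascal n (j+1), Ms_succ n (j+1)]
      rw [idD, e, idD2]
      have e2 : n.choose (j+1+1) = n.choose (j+2) := rfl
      rw [e2]
      calc (n.choose (j+1) + n.choose j) * ((Ms n (j+1) + n.choose (j+1)) + Ms n (j+1))
            + t * (n.choose (j+1) + n.choose (j+2))
          ≤ (n.choose (j+1) + n.choose j) * (X' + Y') := hmain
        _ ≤ (n.choose (j+1) + n.choose j) * R := Nat.mul_le_mul_left _ hR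
    by_cases hva : Ms n (j+1) ≤ v
    · -- (ii-a)
      obtain ⟨tv, hv⟩ : ∃ tv, v = Ms n (j+1) + tv := ⟨v - Ms n (j+1), by omega⟩
      obtain ⟨tu, hu⟩ : ∃ tu, u = Ms n (j+1) + tu := ⟨u - Ms n (j+1), by omega⟩
      have htuB : tu < n.choose (j+1) := by
        have e : (n+1).choose (j+1) * u
            = (n+1).choose (j+1) * Ms n (j+1) + (n+1).choose (j+1) * tu := by rw [hu]; ring
        have h5 : (n+1).choose (j+1) * tu < t * n.choose (j+1) := by omega
        have h6 : t * n.choose (j+1) ≤ (n+1).choose (j+1) * n.choose (j+1) :=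
          Nat.mul_le_mul_right _ ht2
        have h7 : (n+1).choose (j+1) * tu < (n+1).choose (j+1) * n.choose (j+1) := by omega
        exact lt_of_mul_lt_mul_left h7 (Nat.zero_le _)
      have htvB : tv ≤ tu := by omega
      have ihu := wrap ih B (j+1) tu (by omega) hk (by omega) (by omega)
      have ihv := wrap ih C (j+1) tv (by omega) hk (by omega) (by omega)
      have ihu' : n.choose (j+1) * (Ms n (j+1) + n.choose (j+1)) + tu * n.choose (j+2)
          ≤ n.choose (j+1) * X := by
        rw [← Ms_succ n (j+1)]; exact ihu
      have ihv' : n.choose (j+1) * (Ms n (j+1) + n.choose (j+1)) + tv * n.choose (j+2)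
          ≤ n.choose (j+1) * Y := by
        rw [← Ms_succ n (j+1)]; exact ihv
      have hs' : t ≤ n.choose j + tu + tv := by
        have : Ms (n+1) (j+1) + t ≤ u + v := hsum
        omega
      exact finish X Y
        (arith_a (n.choose j) (n.choose (j+1)) (n.choose (j+2)) t tu tv (Ms n (j+1))
          X Y hlog (by omega) hs' ihu' ihv' posBk) h2
    · -- v < Ms n (j+1)
      push_neg at hva
      obtain ⟨sv, hv⟩ : ∃ sv, v = Ms n j + sv := ⟨v - Ms n j, by omega⟩
      have hsv1 : 1 ≤ sv := by omega
      have hsvB : sv ≤ n.choose j := by omega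
      have ihv := ih C j sv hj hsv1 hsvB (by omega)
      have ihv' : n.choose j * Ms n (j+1) + sv * n.choose (j+1) ≤ n.choose j * Y := ihv
      by_cases hua : Ms n (j+1) ≤ u
      · -- (ii-b)
        obtain ⟨tu, hu⟩ : ∃ tu, u = Ms n (j+1) + tu := ⟨u - Ms n (j+1), by omega⟩
        have htuB : tu < n.choose (j+1) := by
          have e : (n+1).choose (j+1) * u
              = (n+1).choose (j+1) * Ms n (j+1) + (n+1).choose (j+1) * tu := by rw [hu]; ring
          have h5 : (n+1).choose (j+1) * tu < t * n.choose (j+1) := by omega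
          have h6 : t * n.choose (j+1) ≤ (n+1).choose (j+1) * n.choose (j+1) :=
            Nat.mul_le_mul_right _ ht2
          have h7 : (n+1).choose (j+1) * tu < (n+1).choose (j+1) * n.choose (j+1) := by omega
          exact lt_of_mul_lt_mul_left h7 (Nat.zero_le _)
        have ihu := wrap ih B (j+1) tu (by omega) hk (by omega) (by omega)
        have ihu' : n.choose (j+1) * (Ms n (j+1) + n.choose (j+1)) + tu * n.choose (j+2)
            ≤ n.choose (j+1) * X := by
          rw [← Ms_succ n (j+1)]; exact ihu
        have hDtu : (n.choose (j+1) + n.choose j) * tu ≤ t * n.choose (j+1) := by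
          have e : (n+1).choose (j+1) * u
              = (n+1).choose (j+1) * Ms n (j+1) + (n+1).choose (j+1) * tu := by rw [hu]; ring
          have h5 : (n+1).choose (j+1) * tu ≤ t * n.choose (j+1) := by omega
          rw [← idD]; exact h5
        have htusv : t ≤ tu + sv := by
          have : Ms (n+1) (j+1) + t ≤ u + v := hsum
          omega
        exact finish X Y
          (arith_b (n.choose j) (n.choose (j+1)) (n.choose (j+2)) t tu sv (Ms n (j+1))
            X Y hlog htusv hDtu ihu' ihv' posBk posBk1) h2
      · -- (ii-c)
        push_neg at hua
        obtain ⟨su, hu⟩ : ∃ su, u = Ms n j + su := ⟨u - Ms n j, by omega⟩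
        have hsu1 : 1 ≤ su := by omega
        have hsuB : su ≤ n.choose j := by omega
        have ihu := ih B j su hj hsu1 hsuB (by omega)
        have ihu' : n.choose j * Ms n (j+1) + su * n.choose (j+1) ≤ n.choose j * X := ihu
        have hsumc : n.choose j + t ≤ su + sv := by
          have : Ms (n+1) (j+1) + t ≤ u + v := hsum
          omega
        exact finish X Y
          (arith_c (n.choose j) (n.choose (j+1)) (n.choose (j+2)) t su sv (Ms n (j+1))
            X Y hlog hsumc ihu' ihv' posBk1) h2

/-- **The curve form of Harper's vertex-isoperimetric bound.** -/
theorem core : ∀ (d : ℕ), IH d := by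
  intro d
  induction d with
  | zero =>
      intro A k t hk ht1 ht2 hA
      interval_cases k
      simp only [Nat.choose_zero_right, Nat.choose_one_right] at ht2 ⊢
      have ht : t = 1 := by omega
      subst ht
      have hA1 : 1 ≤ A.card := by
        simpa [Ms] using hA
      have : A ⊆ Nb A := subset_Nb A
      have h2 : 1 ≤ (Nb A).card := le_trans hA1 (Finset.card_le_card this)
      have e : Ms 0 1 = 1 := by simp [Ms]
      simpa [e] using h2
  | succ n ihn =>
      intro A k t hk ht1 ht2 hA
      by_cases hktop : k = n + 1
      · -- top case : A is everything
        subst hktop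
        rw [Nat.choose_self] at ht2 ⊢
        have ht : t = 1 := by omega
        subst ht
        have hcard : A.card = 2 ^ (n+1) := by
          have h1 : Ms (n+1) (n+1) = 2 ^ (n+1) - 1 := Ms_d (n+1)
          have h2 : A.card ≤ Fintype.card (Fin (n+1) → Bool) := Finset.card_le_univ A
          have h3 : Fintype.card (Fin (n+1) → Bool) = 2 ^ (n+1) := by
            simp [Fintype.card_fun]
          have h4 : 0 < 2 ^ (n+1) := Nat.pow_pos (by norm_num)
          omega
        have huniv : A = Finset.univ := by
          apply Finset.eq_univ_of_card
          rw [hcard]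
          simp [Fintype.card_fun]
        have hNb : (Nb A).card = 2 ^ (n+1) := by
          have h5 : A ⊆ Nb A := subset_Nb A
          have h6 : (Nb A).card ≤ Fintype.card (Fin (n+1) → Bool) := Finset.card_le_univ _
          have h7 := Finset.card_le_card h5
          have h3 : Fintype.card (Fin (n+1) → Bool) = 2 ^ (n+1) := by
            simp [Fintype.card_fun]
          omega
        rw [hNb, Ms_self]
        rw [show (n+1).choose (n+1+1) = 0 from Nat.choose_eq_zero_of_lt (by omega)]
        omega
      · have hkn : k ≤ n := by omega
        have hsplit := card_split A
        rcases le_total ((sect A true).card) ((sect A false).card) with hc | hc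
        · exact step ihn (sect A false) (sect A true) k t ((Nb A).card) hkn ht1 ht2
            (by omega) hc (D1 A false) (D2 A)
        · refine step ihn (sect A true) (sect A false) k t ((Nb A).card) hkn ht1 ht2
            (by omega) hc (D1 A true) ?_
          have := D2 A
          omega

/-- contrapositive single step -/
lemma Lstep {d : ℕ} (S : Finset (Fin d → Bool)) (k : ℕ) (hk : k < d)
    (h : (Nb S).card ≤ Ms d (k+1)) : S.card ≤ Ms d k := by
  by_contra hcon
  push_neg at hcon
  have hc := core d S k 1 (le_of_lt hk) le_rfl (Nat.choose_pos (le_of_lt hk)) (by omega)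
  have hpos : 0 < d.choose (k+1) := Nat.choose_pos hk
  have h2 : d.choose k * (Nb S).card ≤ d.choose k * Ms d (k+1) := Nat.mul_le_mul_left _ h
  omega

lemma halfb (p : ℕ) : 2 ^ (2*p + 1) ≤ Ms (2*p + 2) (p + 2) := by
  have hp : Ms (2*p+1) (p+1) = 4 ^ p := Nat.sum_range_choose_halfway p
  have h1 : Ms (2*p+2) (p+2) = Ms (2*p+1) (p+2) + Ms (2*p+1) (p+1) := Ms_pascal (2*p+1) (p+1)
  have h2 : Ms (2*p+1) (p+2) = Ms (2*p+1) (p+1) + (2*p+1).choose (p+1) := Ms_succ _ _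
  have h4 : (4:ℕ) ^ p = 2 ^ (2*p) := by
    rw [show (4:ℕ) = 2^2 from rfl, ← pow_mul]
  have h5 : (2:ℕ) ^ (2*p+1) = 2 ^ (2*p) + 2 ^ (2*p) := by
    rw [pow_succ]; ring
  omega

theorem stmt6' (d r : ℕ) (hdeven : Even d) (hd : 2 ≤ d)
    (hr : 1 ≤ r) (hrd : r ≤ d / 2)
    (A : Finset (Fin d → Bool)) (hA : A.card ≤ 2 ^ (d - 1)) :
    (Finset.univ.filter (fun x : Fin d → Bool =>
        ∀ y : Fin d → Bool, hammingDist x y ≤ r → y ∈ A)).card ≤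
      ∑ i ∈ Finset.range (d / 2 - r + 1), d.choose i := by
  classical
  set F : ℕ → Finset (Fin d → Bool) :=
    fun j => univ.filter (fun x => ∀ y, hammingDist x y ≤ j → y ∈ A) with hF
  have hNbF : ∀ j, Nb (F (j+1)) ⊆ F j := by
    intro j z hz
    obtain ⟨x, hx, hdzx⟩ := mem_Nb.1 hz
    simp only [hF, mem_filter, mem_univ, true_and] at hx ⊢
    intro y hy
    have hxy : hammingDist x y ≤ 1 + j := by
      calc hammingDist x y ≤ hammingDist x z + hammingDist z y := hammingDist_triangle x z y
        _ ≤ 1 + j := by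
            have : hammingDist x z = hammingDist z x := hammingDist_comm x z
            omega
    exact hx y (by omega)
  have hF0 : (F 0).card ≤ 2 ^ (d-1) := by
    refine le_trans (Finset.card_le_card ?_) hA
    intro x hx
    simp only [hF, mem_filter, mem_univ, true_and] at hx
    exact hx x (by simp [hammingDist_self])
  have hhalf : 2 ^ (d-1) ≤ Ms d (d/2 + 1) := by
    obtain ⟨m, hm⟩ := hdeven
    have hm1 : 1 ≤ m := by omega
    obtain ⟨p, hp⟩ : ∃ p, m = p + 1 := ⟨m - 1, by omega⟩
    have e1 : d = 2*p + 2 := by omega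
    have e2 : d - 1 = 2*p + 1 := by omega
    have e3 : d/2 + 1 = p + 2 := by omega
    rw [e2, e3, e1]
    exact halfb p
  have chain : ∀ j, j ≤ r → (F j).card ≤ Ms d (d/2 - j + 1) := by
    intro j
    induction j with
    | zero => intro _; simpa using le_trans hF0 hhalf
    | succ i ihi =>
        intro hir
        have h1 : (Nb (F (i+1))).card ≤ Ms d ((d/2 - i - 1) + 1 + 1) := by
          have e : (d/2 - i - 1) + 1 + 1 = d/2 - i + 1 := by omega
          rw [e]
          exact le_trans (Finset.card_le_card (hNbF i)) (ihi (by omega))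
        have hkd : (d/2 - i - 1) + 1 < d := by omega
        have h2 := Lstep (F (i+1)) ((d/2 - i - 1) + 1) hkd h1
        have e2 : (d/2 - i - 1) + 1 = d/2 - (i+1) + 1 := by omega
        rwa [e2] at h2
  exact chain r le_rfl

/-- Let `d` be even, `d ≥ 2`, `1 ≤ r ≤ d/2`, and let
`A ⊆ {0,1}^d` with `|A| ≤ 2^(d-1)`. Then the number of points `x` whose
Hamming ball of radius `r` lies entirely in `A` is at most
`∑_{i=0}^{d/2 − r} C(d,i)`, the size of a Hamming ball of radius `d/2 − r`. -/
theorem stmt6 (d r : ℕ) (hdeven : Even d) (hd : 2 ≤ d)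
    (hr : 1 ≤ r) (hrd : r ≤ d / 2)
    (A : Finset (Fin d → Bool)) (hA : A.card ≤ 2 ^ (d - 1)) :
    (Finset.univ.filter (fun x : Fin d → Bool =>
        ∀ y : Fin d → Bool, hammingDist x y ≤ r → y ∈ A)).card ≤
      ∑ i ∈ Finset.range (d / 2 - r + 1), d.choose i := by
  exact stmt6' d r hdeven hd hr hrd A hA
end
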